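/- Let S be a local domain with a nonzero prime ideal Q such that Q S_Q = Q, the quotient S/Q is a valuation ring of the field S_Q/Q, and S_Q is a valuation domain. Then S is a valuation domain. -/
import Mathlib

/-- Let `S` be a local domain with a nonzero prime `Q` such that `Q S_Q = Q`, the
quotient `S/Q` is a valuation ring with quotient field `S_Q/Q`, and `S_Q` is a valuation
domain.  Then `S` is a valuation domain. -/
theorem valuationRing_of_pullback_decomposition
    (S : Type) [CommRing S] [IsDomain S] [IsLocalRing S]
    (Q : Ideal S) (hQp : Q.IsPrime) (hQne : Q ≠ ⊥)
    (hQloc : ∀ y ∈ Ideal.map (algebraMap S (Localization.AtPrime Q)) Q,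
      ∃ q ∈ Q, y = algebraMap S (Localization.AtPrime Q) q)
    (hSQval : ValuationRing (Localization.AtPrime Q))
    (hSQquotval : ValuationRing (S ⧸ Q))
    (hfrac : ∀ y : (Localization.AtPrime Q) ⧸
        (Ideal.map (algebraMap S (Localization.AtPrime Q)) Q),
      ∃ a b : S ⧸ Q, b ≠ 0 ∧
        y * (Ideal.quotientMap _ (algebraMap S (Localization.AtPrime Q))
              Ideal.le_comap_map) b
          = (Ideal.quotientMap _ (algebraMap S (Localization.AtPrime Q))
              Ideal.le_comap_map) a) :
    ValuationRing S := by
  haveI := hQp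
  set R := Localization.AtPrime Q with hR
  set f : S →+* R := algebraMap S R with hf
  have hinj : Function.Injective f :=
    IsLocalization.injective R Q.primeCompl_le_nonZeroDivisors
  have hmapmax : Ideal.map f Q = IsLocalRing.maximalIdeal R :=
    Localization.AtPrime.map_eq_maximalIdeal
  have hcomap : Ideal.comap f (Ideal.map f Q) = Q := by
    rw [hmapmax]; exact Localization.AtPrime.comap_maximalIdeal
  set M : Ideal R := Ideal.map f Q with hM
  set π : R →+* R ⧸ M := Ideal.Quotient.mk M with hπ
  set φ : S ⧸ Q →+* R ⧸ M := Ideal.quotientMap M f Ideal.le_comap_map with hφ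
  haveI : M.IsMaximal := by
    have := IsLocalRing.maximalIdeal.isMaximal R
    rwa [← hmapmax] at this
  have hφinj : Function.Injective φ := Ideal.quotientMap_injective' hcomap.le
  -- lifting lemma
  have key : ∀ (x : R) (e : S ⧸ Q), π x = φ e → ∃ s : S, x = f s := by
    intro x e hxe
    obtain ⟨s, rfl⟩ := Ideal.Quotient.mk_surjective e
    have : π x = π (f s) := by
      rw [hxe, hφ, Ideal.quotientMap_mk]
    have hmem : x - f s ∈ M := by
      rwa [Ideal.Quotient.mk_eq_mk_iff_sub_mem] at this
    obtain ⟨q, hq, hq'⟩ := hQloc _ hmem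
    exact ⟨s + q, by rw [map_add, ← hq']; ring⟩
  -- main dichotomy in R
  have main : ∀ a b : S, ∀ t : R, f a * t = f b → ∃ c : S, a * c = b ∨ b * c = a := by
    intro a b t habt
    by_cases htM : t ∈ M
    · obtain ⟨q, hq, rfl⟩ := hQloc _ htM
      refine ⟨q, Or.inl (hinj ?_)⟩
      rw [map_mul, habt]
    · have htu : IsUnit t := by
        exact IsLocalRing.notMem_maximalIdeal.mp (hmapmax ▸ htM)
      obtain ⟨c, d, hd0, heq⟩ := hfrac (π t)
      have hφd : φ d ≠ 0 := fun h => hd0 (hφinj (by rw [h, map_zero]))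
      obtain ⟨e, he⟩ := PreValuationRing.cond c d
      rcases he with he | he
      · -- c * e = d
        have hc0 : c ≠ 0 := by
          rintro rfl
          rw [map_zero] at heq
          rcases mul_eq_zero.mp heq with h | h
          · exact htM (by rwa [← Ideal.Quotient.eq_zero_iff_mem])
          · exact hφd h
        have hφc : φ c ≠ 0 := fun h => hc0 (hφinj (by rw [h, map_zero]))
        have h1 : π t * φ e = 1 := by
          refine mul_right_cancel₀ hφc ?_
          calc (π t * φ e) * φ c = π t * φ (e * c) := by rw [map_mul, mul_assoc]
            _ = φ c := by rw [mul_comm e c, he, heq]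
            _ = 1 * φ c := by rw [one_mul]
        obtain ⟨u, hu⟩ := htu
        have hut : (u⁻¹ : Rˣ) * t = 1 := by rw [← hu, Units.inv_mul]
        have hπu : π (u⁻¹ : Rˣ) = φ e := by
          have : π (u⁻¹ : Rˣ) * (π t * φ e) = φ e := by
            rw [← mul_assoc, ← map_mul, hut, map_one, one_mul]
          rwa [h1, mul_one] at this
        obtain ⟨s, hs⟩ := key _ _ hπu
        refine ⟨s, Or.inr (hinj ?_)⟩
        rw [map_mul, ← hs, ← habt]
        rw [mul_assoc, mul_comm t _, hut, mul_one]
      · -- d * e = c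
        have hπt : π t = φ e := by
          have : π t * φ d = φ e * φ d := by
            rw [heq, ← map_mul, mul_comm e d, he]
          exact mul_right_cancel₀ hφd this
        obtain ⟨s, hs⟩ := key _ _ hπt
        refine ⟨s, Or.inl (hinj ?_)⟩
        rw [map_mul, ← hs, habt]
  have hpre : ∀ a b : S, ∃ c : S, a * c = b ∨ b * c = a := by
    intro a b
    obtain ⟨t, ht⟩ := PreValuationRing.cond (f a) (f b)
    rcases ht with ht | ht
    · exact main a b t ht
    · obtain ⟨c, hc⟩ := main b a t ht
      exact ⟨c, hc.symm⟩
  haveI : PreValuationRing S := ⟨hpre⟩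
  exact ⟨⟩
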